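/- Let q ≥ 3 be an integer, let g ∈ G_q, let P = g(V_0) be a face of the Farey graph 𝓕_q, and let x = g(ρ^a(∞)) and y = g(ρ^b(∞)) with 0 ≤ a < b ≤ q−1 and x ≠ y. Then every geodesic path in 𝓕_q from x to y has all of its vertices in P. Moreover, if q is even and b − a = q/2 then there are exactly two geodesic paths in 𝓕_q from x to y, and otherwise there is exactly one. -/

import Mathlib

open OnePoint

noncomputable def lamq (q : ℕ) : ℝ := 2 * Real.cos (Real.pi / q)

abbrev RInf : Type := OnePoint ℝ

noncomputable def sigmaFun : RInf → RInf := fun z =>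
  match z with
  | Option.none => ((0 : ℝ) : RInf)
  | Option.some x => if x = 0 then (∞ : RInf) else ((-x⁻¹ : ℝ) : RInf)

lemma sigmaFun_invol (z : RInf) : sigmaFun (sigmaFun z) = z := by
  cases z with
  | none => simp [sigmaFun, OnePoint.infty] <;> rfl
  | some x =>
    by_cases h : x = 0
    · simp only [sigmaFun, h, if_true, if_pos]
      rfl
    · simp only [sigmaFun, h, if_false]
      have h1 : (-x⁻¹ : ℝ) ≠ 0 := by simpa using h
      simp only [h1, if_false]
      have h2 : (-(-x⁻¹)⁻¹ : ℝ) = x := by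
        rw [inv_neg, inv_inv, neg_neg]
      rw [h2]
      rfl

noncomputable def sigmaP : Equiv.Perm RInf :=
  ⟨sigmaFun, sigmaFun, sigmaFun_invol, sigmaFun_invol⟩

noncomputable def tauP (q : ℕ) : Equiv.Perm RInf where
  toFun z := match z with
    | Option.none => (∞ : RInf)
    | Option.some x => Option.some (x + lamq q)
  invFun z := match z with
    | Option.none => (∞ : RInf)
    | Option.some x => Option.some (x - lamq q)
  left_inv z := by cases z <;> simp [OnePoint.infty] <;> rfl
  right_inv z := by cases z <;> simp [OnePoint.infty] <;> rfl

noncomputable def Gq (q : ℕ) : Subgroup (Equiv.Perm RInf) :=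
  Subgroup.closure {sigmaP, tauP q}

def FareyVertex (q : ℕ) (v : RInf) : Prop := ∃ g ∈ Gq q, g ∞ = v

def FareyAdj (q : ℕ) (u v : RInf) : Prop :=
  u ≠ v ∧ ∃ g ∈ Gq q,
    ((g ((0:ℝ) : RInf) = u ∧ g ∞ = v) ∨ (g ((0:ℝ) : RInf) = v ∧ g ∞ = u))

noncomputable def rhoP (q : ℕ) : Equiv.Perm RInf := tauP q * sigmaP

def V0 (q : ℕ) : Set RInf := {v | ∃ i : ℕ, i < q ∧ (rhoP q ^ i) ∞ = v}

def IsFace (q : ℕ) (P : Set RInf) : Prop := ∃ g ∈ Gq q, P = ⇑g '' V0 q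

/-- `y` lies in the connected component of `ℝ∞ \ {u, v}` that does not contain `x`. -/
def SepSide (u v x y : RInf) : Prop :=
  y ∈ ({u, v}ᶜ : Set RInf) ∧ x ∉ connectedComponentIn ({u, v}ᶜ : Set RInf) y

noncomputable def Tq (q : ℕ) (b : ℤ) : RInf → RInf := fun z =>
  match z with
  | Option.none => ((b * lamq q : ℝ) : RInf)
  | Option.some x => if x = 0 then (∞ : RInf) else ((b * lamq q - x⁻¹ : ℝ) : RInf)

noncomputable def RosenValue (q : ℕ) (bs : List ℤ) : RInf := bs.foldr (Tq q) ∞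

def IsGeodesicRosen (q : ℕ) (bs : List ℤ) : Prop :=
  bs ≠ [] ∧ RosenValue q bs ≠ ∞ ∧
  ∀ cs : List ℤ, cs ≠ [] → RosenValue q cs = RosenValue q bs → bs.length ≤ cs.length

def IsPathFrom (q : ℕ) (p : List RInf) (x y : RInf) : Prop :=
  p.Chain' (FareyAdj q) ∧ p.head? = Option.some x ∧ p.getLast? = Option.some y

def IsGeodesicPath (q : ℕ) (p : List RInf) (x y : RInf) : Prop :=
  IsPathFrom q p x y ∧ ∀ p' : List RInf, IsPathFrom q p' x y → p.length ≤ p'.length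

/-- `{u, v}` is a pair of `y`-parents of `x`. -/
def IsParentPair (q : ℕ) (y x u v : RInf) : Prop :=
  ∃ g ∈ Gq q, ∃ i : ℤ,
    g ((rhoP q ^ i) ∞) = x ∧
    ({u, v} : Set RInf) = {g ((rhoP q ^ (i-1)) ∞), g ((rhoP q ^ (i+1)) ∞)} ∧
    SepSide u v x y

/-- `P 0, …, P (n-1)` is the q-chain from `x` to `y`. -/
def IsQChain (q : ℕ) (x y : RInf) (n : ℕ) (P : ℕ → Set RInf) : Prop :=
  1 ≤ n ∧ (∀ j < n, IsFace q (P j)) ∧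
  (∃ g ∈ Gq q, ∃ i : ℤ,
      g ((rhoP q ^ i) ∞) = x ∧ P 0 = ⇑g '' V0 q ∧
      SepSide (g ((rhoP q ^ (i-1)) ∞)) (g ((rhoP q ^ (i+1)) ∞)) x y) ∧
  y ∈ P (n-1) ∧ (∀ j, j < n - 1 → y ∉ P j) ∧
  (∀ j, j + 1 < n → ∃ a b : RInf, FareyAdj q a b ∧ a ∈ P j ∧ b ∈ P j ∧
      (y ∈ ({a, b}ᶜ : Set RInf) ∧
        ∀ w ∈ P j, w ∉ connectedComponentIn ({a, b}ᶜ : Set RInf) y) ∧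
      P (j+1) ≠ P j ∧ a ∈ P (j+1) ∧ b ∈ P (j+1))

/-- Fibonacci numbers with `F 0 = 1`, `F 1 = 2`. -/
def fibF : ℕ → ℕ
  | 0 => 1
  | 1 => 2
  | (n+2) => fibF (n+1) + fibF n

section Basic

open OnePoint

lemma sigmaP_apply (z : RInf) : sigmaP z = sigmaFun z := rfl

lemma coe_eq_some (r : ℝ) : ((r:ℝ) : RInf) = Option.some r := rfl

lemma infty_eq_none : (∞ : RInf) = Option.none := rfl

lemma sigmaP_infty : sigmaP ∞ = ((0:ℝ) : RInf) := rfl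

lemma sigmaP_zero : sigmaP ((0:ℝ) : RInf) = ∞ := by
  rw [sigmaP_apply, coe_eq_some]
  simp [sigmaFun]

lemma sigmaP_coe (r : ℝ) (h : r ≠ 0) : sigmaP ((r:ℝ) : RInf) = ((-r⁻¹ : ℝ) : RInf) := by
  rw [sigmaP_apply, coe_eq_some]
  simp [sigmaFun, h]

lemma sigmaP_sq : sigmaP * sigmaP = 1 := by
  ext z
  exact sigmaFun_invol z

lemma tauP_infty (q : ℕ) : tauP q ∞ = ∞ := rfl

lemma tauP_coe (q : ℕ) (r : ℝ) : tauP q ((r:ℝ) : RInf) = ((r + lamq q : ℝ) : RInf) := rfl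

lemma rhoP_apply (q : ℕ) (z : RInf) : rhoP q z = tauP q (sigmaP z) := rfl

lemma rhoP_infty (q : ℕ) : rhoP q ∞ = ((lamq q : ℝ) : RInf) := by
  rw [rhoP_apply, sigmaP_infty, tauP_coe]
  norm_num

lemma rhoP_zero (q : ℕ) : rhoP q ((0:ℝ) : RInf) = ∞ := by
  rw [rhoP_apply, sigmaP_zero, tauP_infty]

lemma rhoP_coe (q : ℕ) (r : ℝ) (h : r ≠ 0) :
    rhoP q ((r:ℝ) : RInf) = ((lamq q - r⁻¹ : ℝ) : RInf) := by
  rw [rhoP_apply, sigmaP_coe r h, tauP_coe]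
  ring_nf

lemma sigmaP_mem (q : ℕ) : sigmaP ∈ Gq q :=
  Subgroup.subset_closure (by simp)

lemma tauP_mem (q : ℕ) : tauP q ∈ Gq q :=
  Subgroup.subset_closure (by simp)

lemma rhoP_mem (q : ℕ) : rhoP q ∈ Gq q :=
  mul_mem (tauP_mem q) (sigmaP_mem q)

lemma rho_mul_sigma (q : ℕ) : rhoP q * sigmaP = tauP q := by
  rw [rhoP, mul_assoc, sigmaP_sq, mul_one]

end Basic
section Cheb

open Real

/-- `cheb q k = sin(kπ/q)/sin(π/q)`. -/
noncomputable def cheb (q k : ℕ) : ℝ := Real.sin (k * (Real.pi / q)) / Real.sin (Real.pi / q)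

variable {q : ℕ} (hq : 3 ≤ q)

lemma theta_pos (hq : 3 ≤ q) : 0 < Real.pi / q := by
  apply div_pos Real.pi_pos
  exact_mod_cast Nat.lt_of_lt_of_le (by norm_num) hq

lemma theta_lt_pi (hq : 3 ≤ q) : Real.pi / q < Real.pi := by
  rw [div_lt_iff₀ (by exact_mod_cast Nat.lt_of_lt_of_le (by norm_num) hq)]
  nlinarith [Real.pi_pos, (show (3:ℝ) ≤ q by exact_mod_cast hq)]

lemma sin_theta_pos (hq : 3 ≤ q) : 0 < Real.sin (Real.pi / q) :=
  Real.sin_pos_of_pos_of_lt_pi (theta_pos hq) (theta_lt_pi hq)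

lemma cheb_zero : cheb q 0 = 0 := by simp [cheb]

lemma cheb_one (hq : 3 ≤ q) : cheb q 1 = 1 := by
  simp [cheb]
  exact (ne_of_gt (sin_theta_pos hq))

lemma cheb_two (hq : 3 ≤ q) : cheb q 2 = lamq q := by
  have h := sin_theta_pos hq
  simp only [cheb, lamq]
  push_cast
  rw [show (2:ℝ) * (Real.pi / q) = Real.pi/q + Real.pi/q by ring, Real.sin_add]
  field_simp
  ring

lemma cheb_rec (hq : 3 ≤ q) (k : ℕ) :
    cheb q (k + 2) = lamq q * cheb q (k + 1) - cheb q k := by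
  have h := sin_theta_pos hq
  simp only [cheb, lamq]
  push_cast
  rw [show ((k:ℝ)+2) * (Real.pi/q) = ((k:ℝ)+1)*(Real.pi/q) + Real.pi/q by ring,
      show ((k:ℝ)) * (Real.pi/q) = ((k:ℝ)+1)*(Real.pi/q) - Real.pi/q by ring,
      Real.sin_add, Real.sin_sub]
  field_simp
  ring

lemma cheb_pos (hq : 3 ≤ q) {k : ℕ} (h1 : 1 ≤ k) (h2 : k < q) : 0 < cheb q k := by
  apply div_pos _ (sin_theta_pos hq)
  apply Real.sin_pos_of_pos_of_lt_pi
  · apply mul_pos _ (theta_pos hq)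
    exact_mod_cast h1
  · have hqpos : (0:ℝ) < q := by exact_mod_cast Nat.lt_of_lt_of_le (by norm_num) hq
    have hkq : (k:ℝ) < q := by exact_mod_cast h2
    have := mul_lt_mul_of_pos_right hkq (theta_pos hq)
    have hP : (q:ℝ) * (Real.pi / q) = Real.pi := by field_simp
    linarith

lemma cheb_q (hq : 3 ≤ q) : cheb q q = 0 := by
  have hqne : (q:ℝ) ≠ 0 := by positivity
  simp only [cheb]
  rw [show (q:ℝ) * (Real.pi/q) = Real.pi by field_simp, Real.sin_pi, zero_div]

lemma cheb_q_sub_one (hq : 3 ≤ q) {k : ℕ} (hk : k + 1 = q) : cheb q k = 1 := by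
  have hqne : (q:ℝ) ≠ 0 := by positivity
  have : (k:ℝ) = q - 1 := by
    have : ((k:ℝ)) + 1 = q := by exact_mod_cast congrArg (Nat.cast : ℕ → ℝ) hk
    linarith
  simp only [cheb, this]
  rw [show ((q:ℝ) - 1) * (Real.pi/q) = Real.pi - Real.pi/q by field_simp,
      Real.sin_pi_sub]
  rw [div_self (ne_of_gt (sin_theta_pos hq))]

lemma cheb_q_add_one (hq : 3 ≤ q) : cheb q (q + 1) = -1 := by
  have hqne : (q:ℝ) ≠ 0 := by positivity
  simp only [cheb]
  push_cast
  rw [show ((q:ℝ) + 1) * (Real.pi/q) = Real.pi + Real.pi/q by field_simp,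
      Real.sin_add, Real.sin_pi, Real.cos_pi]
  rw [show (0:ℝ) * Real.cos (Real.pi/q) + -1 * Real.sin (Real.pi/q) = -Real.sin (Real.pi/q) by ring]
  rw [neg_div, div_self (ne_of_gt (sin_theta_pos hq))]

lemma cheb_det (hq : 3 ≤ q) (k : ℕ) :
    cheb q (k + 2) * cheb q k - (cheb q (k + 1))^2 = -1 := by
  have h := sin_theta_pos hq
  simp only [cheb]
  push_cast
  set t := Real.pi / q with ht
  have hs : Real.sin t ^ 2 + Real.cos t ^ 2 = 1 := Real.sin_sq_add_cos_sq t
  rw [show ((k:ℝ)+2) * t = ((k:ℝ)+1)*t + t by ring,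
      show ((k:ℝ)) * t = ((k:ℝ)+1)*t - t by ring]
  set A := ((k:ℝ)+1)*t with hA
  have hs2 : Real.sin A ^ 2 + Real.cos A ^ 2 = 1 := Real.sin_sq_add_cos_sq A
  have key : Real.sin (A + t) * Real.sin (A - t) - Real.sin A ^ 2 = -(Real.sin t ^2) := by
    rw [Real.sin_add, Real.sin_sub]
    linear_combination Real.sin A ^ 2 * hs - Real.sin t ^ 2 * hs2
  rw [div_mul_div_comm, div_pow,
      show Real.sin t * Real.sin t = Real.sin t ^ 2 by ring, ← sub_div, key]
  rw [neg_div, div_self (by positivity)]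

end Cheb
section Mobius

open OnePoint

/-- value of the `k`-th vertex of the base face. -/
noncomputable def vq (q k : ℕ) : ℝ := cheb q (k+1) / cheb q k

/-- Explicit Möbius formula for `ρ^k`. -/
noncomputable def Fm (q k : ℕ) : RInf → RInf := fun z =>
  match z with
  | Option.none => if cheb q k = 0 then (∞:RInf) else ((vq q k : ℝ) : RInf)
  | Option.some r => if cheb q k * r - cheb q (k-1) = 0 then (∞:RInf)
      else (((cheb q (k+1) * r - cheb q k) / (cheb q k * r - cheb q (k-1)) : ℝ) : RInf)

variable {q : ℕ}

lemma Fm_infty (q k : ℕ) :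
    Fm q k ∞ = if cheb q k = 0 then (∞:RInf) else ((vq q k : ℝ) : RInf) := rfl

lemma Fm_none (q k : ℕ) :
    Fm q k Option.none = if cheb q k = 0 then (∞:RInf) else ((vq q k : ℝ) : RInf) := rfl

lemma Fm_coe (q k : ℕ) (r : ℝ) :
    Fm q k ((r:ℝ):RInf) = if cheb q k * r - cheb q (k-1) = 0 then (∞:RInf)
      else (((cheb q (k+1) * r - cheb q k) / (cheb q k * r - cheb q (k-1)) : ℝ) : RInf) := rfl

lemma Fm_some (q k : ℕ) (r : ℝ) :
    Fm q k (Option.some r) = if cheb q k * r - cheb q (k-1) = 0 then (∞:RInf)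
      else (((cheb q (k+1) * r - cheb q k) / (cheb q k * r - cheb q (k-1)) : ℝ) : RInf) := rfl

lemma rho_pow_formula (hq : 3 ≤ q) :
    ∀ m, m + 1 ≤ q → ∀ z, (rhoP q ^ (m+1)) z = Fm q (m+1) z := by
  intro m
  induction m with
  | zero =>
    intro _ z
    rw [pow_one]
    match z with
    | Option.none =>
      rw [show (Option.none : RInf) = ∞ from rfl, Fm_infty, rhoP_infty]
      rw [if_neg (by rw [cheb_one hq]; norm_num)]
      rw [vq, cheb_two hq, cheb_one hq, div_one]
    | Option.some r =>
      rw [show (Option.some r : RInf) = ((r:ℝ):RInf) from rfl, Fm_coe]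
      rw [cheb_one hq, cheb_zero]
      by_cases hr : r = 0
      · rw [if_pos (by rw [hr]; ring), hr, rhoP_zero]
      · rw [if_neg (by simpa using hr), rhoP_coe q r hr, cheb_two hq]
        norm_num
        congr 1
        field_simp
  | succ m ih =>
    intro hm z
    have hm' : m + 1 ≤ q := by omega
    have h1pos : 0 < cheb q (m+1) := cheb_pos hq (by omega) (by omega)
    have hrec1 : cheb q (m+2) = lamq q * cheb q (m+1) - cheb q m := cheb_rec hq m
    have hrec2 : cheb q (m+3) = lamq q * cheb q (m+2) - cheb q (m+1) := cheb_rec hq (m+1)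
    have hdet : cheb q (m+2) * cheb q m - (cheb q (m+1))^2 = -1 := cheb_det hq m
    have hstep : (rhoP q ^ (m+1+1)) z = rhoP q ((rhoP q ^ (m+1)) z) := by
      rw [pow_succ' (rhoP q) (m+1)]
      rfl
    rw [hstep, ih hm' z]
    match z with
    | Option.none =>
      rw [Fm_none, Fm_none, if_neg (ne_of_gt h1pos)]
      by_cases h2 : cheb q (m+2) = 0
      · rw [if_pos h2]
        have : vq q (m+1) = 0 := by rw [vq, h2, zero_div]
        rw [this]
        exact rhoP_zero q
      · rw [if_neg h2]
        have hv : vq q (m+1) ≠ 0 := div_ne_zero h2 (ne_of_gt h1pos)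
        rw [rhoP_coe q _ hv]
        congr 1
        rw [vq, vq]
        rw [inv_div]
        field_simp
        linear_combination (-1 : ℝ) * hrec2
    | Option.some r =>
      rw [Fm_some, Fm_some]
      simp only [Nat.add_sub_cancel]
      by_cases hden1 : cheb q (m+1) * r - cheb q m = 0
      · rw [if_pos hden1, rhoP_infty]
        have hden2 : cheb q (m+1) * (cheb q (m+2) * r - cheb q (m+1)) = -1 := by
          linear_combination hdet + cheb q (m+2) * hden1
        have hden2' : cheb q (m+2) * r - cheb q (m+1) ≠ 0 := by
          intro h
          rw [h, mul_zero] at hden2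
          norm_num at hden2
        rw [if_neg hden2']
        congr 1
        rw [eq_div_iff (by exact_mod_cast hden2')]
        linear_combination hden1 + hrec1 - r * hrec2
      · rw [if_neg hden1]
        by_cases hnum1 : cheb q (m+2) * r - cheb q (m+1) = 0
        · have : (cheb q (m+2) * r - cheb q (m+1)) / (cheb q (m+1) * r - cheb q m) = 0 := by
            rw [hnum1, zero_div]
          rw [this, rhoP_zero, if_pos hnum1]
        · have hw : (cheb q (m+2) * r - cheb q (m+1)) / (cheb q (m+1) * r - cheb q m) ≠ 0 :=
            div_ne_zero hnum1 hden1
          rw [rhoP_coe q _ hw, if_neg hnum1]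
          congr 1
          have key : cheb q (m+1+1+1) * r - cheb q (m+1+1)
              = lamq q * (cheb q (m+2) * r - cheb q (m+1)) - (cheb q (m+1) * r - cheb q m) := by
            show cheb q (m+3) * r - cheb q (m+2) = _
            linear_combination r * hrec2 - hrec1
          rw [key, inv_div, sub_div' hnum1]
  
lemma rhoP_pow_q (hq : 3 ≤ q) : rhoP q ^ q = 1 := by
  obtain ⟨m, rfl⟩ : ∃ m, q = m + 1 := ⟨q - 1, by omega⟩
  ext z
  rw [rho_pow_formula hq m (le_refl _)]
  have hq1 : cheb (m+1) (m+1) = 0 := cheb_q hq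
  have hqm : cheb (m+1) m = 1 := cheb_q_sub_one hq rfl
  have hqp : cheb (m+1) (m+2) = -1 := cheb_q_add_one hq
  match z with
  | Option.none =>
    rw [Fm_none, if_pos hq1]
    rfl
  | Option.some r =>
    rw [Fm_some]
    simp only [Nat.add_sub_cancel]
    rw [hq1, hqm, hqp]
    rw [if_neg (by norm_num)]
    simp only [Equiv.Perm.coe_one, id_eq]
    congr 1
    field_simp
    ring

lemma rho_pow_infty (hq : 3 ≤ q) {k : ℕ} (h1 : 1 ≤ k) (h2 : k ≤ q - 1) :
    (rhoP q ^ k) ∞ = ((vq q k : ℝ) : RInf) := by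
  obtain ⟨m, rfl⟩ : ∃ m, k = m + 1 := ⟨k - 1, by omega⟩
  rw [rho_pow_formula hq m (by omega), Fm_infty,
    if_neg (ne_of_gt (cheb_pos hq (by omega) (by omega)))]

end Mobius
section Arcs

open OnePoint

variable {q : ℕ}

lemma vq_one (hq : 3 ≤ q) : vq q 1 = lamq q := by
  rw [vq, cheb_two hq, cheb_one hq, div_one]

lemma vq_last (hq : 3 ≤ q) {k : ℕ} (hk : k + 1 = q) : vq q k = 0 := by
  rw [vq, hk, cheb_q hq, zero_div]

lemma vq_sub (hq : 3 ≤ q) {k : ℕ} (h1 : 1 ≤ k) (h2 : k + 2 ≤ q) :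
    vq q k - vq q (k+1) = 1 / (cheb q k * cheb q (k+1)) := by
  have p1 : 0 < cheb q k := cheb_pos hq h1 (by omega)
  have p2 : 0 < cheb q (k+1) := cheb_pos hq (by omega) (by omega)
  rw [vq, vq]
  field_simp
  linear_combination (-1 : ℝ) * cheb_det hq k

lemma vq_succ_lt (hq : 3 ≤ q) {k : ℕ} (h1 : 1 ≤ k) (h2 : k + 2 ≤ q) :
    vq q (k+1) < vq q k := by
  have p1 : 0 < cheb q k := cheb_pos hq h1 (by omega)
  have p2 : 0 < cheb q (k+1) := cheb_pos hq (by omega) (by omega)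
  have := vq_sub hq h1 h2
  have hpos : 0 < 1 / (cheb q k * cheb q (k+1)) := by positivity
  linarith

lemma vq_lt (hq : 3 ≤ q) {j k : ℕ} (h1 : 1 ≤ j) (hjk : j < k) (h2 : k ≤ q - 1) :
    vq q k < vq q j := by
  induction k with
  | zero => omega
  | succ n ih =>
    rcases Nat.lt_or_ge j n with h | h
    · have := ih (by omega) (by omega)
      have h2' : vq q (n+1) < vq q n := vq_succ_lt hq (by omega) (by omega)
      linarith
    · have hjn : j = n := by omega
      subst hjn
      exact vq_succ_lt hq h1 (by omega)

lemma vq_nonneg (hq : 3 ≤ q) {k : ℕ} (h1 : 1 ≤ k) (h2 : k ≤ q - 1) : 0 ≤ vq q k := by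
  apply div_nonneg _ (le_of_lt (cheb_pos hq h1 (by omega)))
  rcases Nat.lt_or_ge (k+1) q with h | h
  · exact le_of_lt (cheb_pos hq (by omega) h)
  · have : k + 1 = q := by omega
    rw [this, cheb_q hq]

lemma vq_pos (hq : 3 ≤ q) {k : ℕ} (h1 : 1 ≤ k) (h2 : k ≤ q - 2) : 0 < vq q k := by
  have h0 : vq q (k+1) ≥ 0 := vq_nonneg hq (by omega) (by omega)
  have := vq_succ_lt hq h1 (by omega)
  linarith

lemma lamq_pos (hq : 3 ≤ q) : 0 < lamq q := by
  rw [← vq_one hq]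
  exact vq_pos hq le_rfl (by omega)

/-- membership in the `i`-th closed arc of the base face, `0 ≤ i ≤ q-1`. -/
def inArc (q i : ℕ) : RInf → Prop := fun z =>
  match z with
  | Option.none => i = 0 ∨ i = q - 1
  | Option.some r => (i = 0 ∧ vq q 1 ≤ r) ∨ (i = q - 1 ∧ r ≤ 0) ∨
      (i ≠ 0 ∧ i ≠ q - 1 ∧ vq q (i+1) ≤ r ∧ r ≤ vq q i)

/-- membership in the closed positive arc. -/
def inP : RInf → Prop := fun z =>
  match z with
  | Option.none => True
  | Option.some r => 0 ≤ r

/-- membership in the closed negative arc. -/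
def inN : RInf → Prop := fun z =>
  match z with
  | Option.none => True
  | Option.some r => r ≤ 0

lemma inN_infty : inN ∞ := trivial

lemma inN_zero : inN ((0:ℝ) : RInf) := le_refl (0:ℝ)

lemma inArc_last_of_inN (hq : 3 ≤ q) {z : RInf} (h : inN z) : inArc q (q-1) z := by
  match z with
  | Option.none => exact Or.inr rfl
  | Option.some r => exact Or.inr (Or.inl ⟨rfl, h⟩)

lemma inN_of_inArc_last (hq : 3 ≤ q) {z : RInf} (h : inArc q (q-1) z) : inN z := by
  match z with
  | Option.none => trivial
  | Option.some r =>
    rcases h with ⟨h0, _⟩ | ⟨_, hr⟩ | ⟨_, hne, _⟩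
    · omega
    · exact hr
    · omega

lemma inP_of_inArc (hq : 3 ≤ q) {i : ℕ} (hi : i ≤ q - 2) {z : RInf} (h : inArc q i z) :
    inP z := by
  match z with
  | Option.none => trivial
  | Option.some r =>
    rcases h with ⟨h0, hr⟩ | ⟨hlast, _⟩ | ⟨_, _, hlow, _⟩
    · have := lamq_pos hq
      rw [vq_one hq] at hr
      show (0:ℝ) ≤ r
      linarith
    · omega
    · show (0:ℝ) ≤ r
      have : 0 ≤ vq q (i+1) := vq_nonneg hq (by omega) (by omega)
      linarith

lemma sigma_inP_to_inN {z : RInf} (h : inP z) : inN (sigmaP z) := by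
  match z with
  | Option.none =>
    rw [show (Option.none : RInf) = ∞ from rfl, sigmaP_infty]
    exact inN_zero
  | Option.some r =>
    by_cases hr : r = 0
    · subst hr
      rw [show (Option.some (0:ℝ) : RInf) = ((0:ℝ):RInf) from rfl, sigmaP_zero]
      exact inN_infty
    · rw [show (Option.some r : RInf) = ((r:ℝ):RInf) from rfl, sigmaP_coe r hr]
      show -r⁻¹ ≤ 0
      have hr' : 0 < r := lt_of_le_of_ne h (Ne.symm hr)
      have : 0 < r⁻¹ := inv_pos.mpr hr'
      linarith

lemma rho_pow_inN_to_arc (hq : 3 ≤ q) {k : ℕ} (h1 : 1 ≤ k) (h2 : k ≤ q - 1)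
    {z : RInf} (h : inN z) : inArc q (k-1) ((rhoP q ^ k) z) := by
  obtain ⟨m, rfl⟩ : ∃ m, k = m + 1 := ⟨k - 1, by omega⟩
  rw [rho_pow_formula hq m (by omega)]
  simp only [Nat.add_sub_cancel]
  have p1 : 0 < cheb q (m+1) := cheb_pos hq (by omega) (by omega)
  match z with
  | Option.none =>
    rw [Fm_none, if_neg (ne_of_gt p1)]
    rcases Nat.eq_zero_or_pos m with hm | hm
    · subst hm
      exact Or.inl ⟨rfl, le_refl _⟩
    · refine Or.inr (Or.inr ⟨by omega, by omega, le_refl _, ?_⟩)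
      exact le_of_lt (vq_succ_lt hq (by omega) (by omega))
  | Option.some r =>
    have hr : r ≤ 0 := h
    rw [Fm_some]
    simp only [Nat.add_sub_cancel]
    rcases Nat.eq_zero_or_pos m with hm | hm
    · subst hm
      simp only [cheb_zero, cheb_one hq, one_mul, sub_zero]
      by_cases hr0 : r = 0
      · rw [if_pos (by rw [hr0])]
        exact Or.inl rfl
      · rw [if_neg hr0]
        refine Or.inl ⟨rfl, ?_⟩
        rw [vq_one hq]
        have hrneg : r < 0 := lt_of_le_of_ne hr hr0
        rw [cheb_two hq, le_div_iff_of_neg hrneg]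
        nlinarith
    · -- 1 ≤ m, so 2 ≤ m+1 ≤ q-1
      have p0 : 0 < cheb q m := cheb_pos hq hm (by omega)
      have hden : cheb q (m+1) * r - cheb q m < 0 := by nlinarith
      rw [if_neg (ne_of_lt hden)]
      have hdet : cheb q (m+2) * cheb q m - (cheb q (m+1))^2 = -1 := cheb_det hq m
      set N := cheb q (m+2) * r - cheb q (m+1) with hN
      set D := cheb q (m+1) * r - cheb q m with hD
      have hD0 : D ≠ 0 := ne_of_lt hden
      have key1 : N * cheb q (m+1) - D * cheb q (m+2) = -1 := by
        rw [hN, hD]; linear_combination hdet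
      have key2 : cheb q (m+1) * D - cheb q m * N = r := by
        rw [hN, hD]; linear_combination (-r) * hdet
      have e1 : N / D - vq q (m+1) = (-1) / (D * cheb q (m+1)) := by
        rw [vq, show m+1+1 = m+2 from rfl,
          div_sub_div _ _ hD0 (ne_of_gt p1), key1]
      have e2 : vq q m - N / D = r / (cheb q m * D) := by
        rw [vq, div_sub_div _ _ (ne_of_gt p0) hD0, key2]
      have he1 : 0 ≤ N / D - vq q (m+1) := by
        rw [e1]
        apply le_of_lt
        apply div_pos_of_neg_of_neg (by norm_num)
        nlinarith
      have he2 : 0 ≤ vq q m - N / D := by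
        rw [e2]
        rcases lt_or_eq_of_le hr with hrneg | hrzero
        · apply le_of_lt
          apply div_pos_of_neg_of_neg hrneg
          nlinarith
        · rw [hrzero, zero_div]
      refine Or.inr (Or.inr ⟨by omega, by omega, by linarith, by linarith⟩)

end Arcs
section Words

open OnePoint

variable {q : ℕ}

/-- product of syllables `ρ^{k₁} σ ρ^{k₂} σ ⋯ ρ^{kₘ} σ`. -/
noncomputable def sylProd (q : ℕ) (L : List ℕ) : Equiv.Perm RInf :=
  L.foldr (fun k acc => rhoP q ^ k * sigmaP * acc) 1

noncomputable def sigb : Bool → Equiv.Perm RInf := fun e => if e then sigmaP else 1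

lemma sylProd_nil : sylProd q [] = 1 := rfl

lemma sylProd_cons (k : ℕ) (L : List ℕ) :
    sylProd q (k :: L) = rhoP q ^ k * sigmaP * sylProd q L := rfl

lemma sylProd_concat (L : List ℕ) (k : ℕ) :
    sylProd q (L ++ [k]) = sylProd q L * (rhoP q ^ k * sigmaP) := by
  induction L with
  | nil => simp [sylProd_nil, sylProd_cons, sylProd]
  | cons a L ih =>
    rw [List.cons_append, sylProd_cons, ih, sylProd_cons]
    simp only [mul_assoc]

/-- `h` has an alternating word representation. -/
def GoodWord (q : ℕ) (h : Equiv.Perm RInf) : Prop :=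
  ∃ (e d : Bool) (L : List ℕ), (∀ k ∈ L, 1 ≤ k ∧ k ≤ q - 1) ∧
    h = sigb e * sylProd q L * sigb d

lemma goodword_of_mem (hq : 3 ≤ q) {h : Equiv.Perm RInf} (hh : h ∈ Gq q) :
    GoodWord q h := by
  have hrq : rhoP q ^ q = 1 := rhoP_pow_q hq
  have hsig2 : sigmaP * sigmaP = 1 := sigmaP_sq
  have hss : ∀ x : Equiv.Perm RInf, sigmaP * (sigmaP * x) = x := by
    intro x; rw [← mul_assoc, hsig2, one_mul]
  have hrr : ∀ (a b : ℕ) (x : Equiv.Perm RInf),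
      rhoP q ^ a * (rhoP q ^ b * x) = rhoP q ^ (a+b) * x := by
    intro a b x; rw [← mul_assoc, ← pow_add]
  have hrr2 : ∀ (a b : ℕ), rhoP q ^ a * rhoP q ^ b = rhoP q ^ (a+b) := by
    intro a b; rw [← pow_add]
  have hsiginv : sigmaP⁻¹ = sigmaP := inv_eq_of_mul_eq_one_right hsig2
  have htau : tauP q = rhoP q ^ 1 * sigmaP := by rw [pow_one, rho_mul_sigma]
  have hrhoinv : (rhoP q)⁻¹ = rhoP q ^ (q-1) := by
    apply inv_eq_of_mul_eq_one_right
    rw [← pow_succ', show q-1+1 = q by omega, hrq]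
  have htauinv : (tauP q)⁻¹ = sigmaP * rhoP q ^ (q-1) := by
    rw [htau, mul_inv_rev, hsiginv, pow_one, hrhoinv]
  have mulσ : ∀ y, GoodWord q y → GoodWord q (y * sigmaP) := by
    rintro y ⟨e, d, L, hL, rfl⟩
    cases d with
    | false =>
      exact ⟨e, true, L, hL, by simp only [sigb, if_neg Bool.false_ne_true, mul_one, if_pos]⟩
    | true =>
      refine ⟨e, false, L, hL, ?_⟩
      simp only [sigb, if_pos, if_neg Bool.false_ne_true, mul_one, mul_assoc, hsig2]
  have mulτ : ∀ y, GoodWord q y → GoodWord q (y * tauP q) := by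
    rintro y ⟨e, d, L, hL, rfl⟩
    cases d with
    | false =>
      refine ⟨e, false, L ++ [1], ?_, ?_⟩
      · intro k hk
        rcases List.mem_append.mp hk with h | h
        · exact hL k h
        · simp at h; omega
      · rw [htau, sylProd_concat]
        simp only [sigb, if_neg Bool.false_ne_true, mul_one, mul_assoc]
    | true =>
      rcases List.eq_nil_or_concat L with rfl | ⟨L₀, k, rfl⟩
      · refine ⟨!e, false, [1], by simp; omega, ?_⟩
        rw [htau]
        cases e <;>
          simp only [sigb, Bool.not_true, Bool.not_false, if_pos, if_neg Bool.false_ne_true,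
            sylProd_cons, sylProd_nil, one_mul, mul_one, mul_assoc, hss, hsig2]
      · have hk := hL k (by simp [List.concat_eq_append])
        rw [List.concat_eq_append]
        rcases Nat.lt_or_ge (k+1) q with hk1 | hk1
        · refine ⟨e, false, L₀ ++ [k+1], ?_, ?_⟩
          · intro j hj
            rcases List.mem_append.mp hj with h | h
            · exact hL j (by simp [List.concat_eq_append, h])
            · simp at h; omega
          · rw [htau, sylProd_concat, sylProd_concat]
            simp only [sigb, if_pos, if_neg Bool.false_ne_true, mul_one, mul_assoc, hss, hrr]
        · have hkq : k + 1 = q := by omega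
          refine ⟨e, true, L₀, fun j hj => hL j (by simp [List.concat_eq_append, hj]), ?_⟩
          rw [htau, sylProd_concat]
          simp only [sigb, if_pos, mul_assoc, hss, hrr, hkq, hrq, one_mul]
  have mulτinv : ∀ y, GoodWord q y → GoodWord q (y * (tauP q)⁻¹) := by
    rintro y ⟨e, d, L, hL, rfl⟩
    cases d with
    | true =>
      refine ⟨e, true, L ++ [q-1], ?_, ?_⟩
      · intro k hk
        rcases List.mem_append.mp hk with h | h
        · exact hL k h
        · simp at h; omega
      · rw [htauinv, sylProd_concat]
        simp only [sigb, if_pos, mul_assoc, hss, hsig2, mul_one, one_mul]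
    | false =>
      rcases List.eq_nil_or_concat L with rfl | ⟨L₀, k, rfl⟩
      · refine ⟨!e, true, [q-1], by simp; omega, ?_⟩
        rw [htauinv]
        cases e <;>
          simp only [sigb, Bool.not_true, Bool.not_false, if_pos, if_neg Bool.false_ne_true,
            sylProd_cons, sylProd_nil, one_mul, mul_one, mul_assoc, hss, hsig2]
      · have hk := hL k (by simp [List.concat_eq_append])
        rw [List.concat_eq_append]
        rcases Nat.lt_or_ge 1 k with hk1 | hk1
        · refine ⟨e, true, L₀ ++ [k-1], ?_, ?_⟩
          · intro j hj
            rcases List.mem_append.mp hj with h | h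
            · exact hL j (by simp [List.concat_eq_append, h])
            · simp at h; omega
          · rw [htauinv, sylProd_concat, sylProd_concat]
            simp only [sigb, if_pos, if_neg Bool.false_ne_true, mul_one, one_mul,
              mul_assoc, hss, hsig2, hrr, hrr2]
            rw [show k + (q-1) = (k-1) + q by omega, pow_add, hrq, mul_one]
        · have hk1' : k = 1 := by omega
          refine ⟨e, false, L₀, fun j hj => hL j (by simp [List.concat_eq_append, hj]), ?_⟩
          rw [htauinv, sylProd_concat]
          simp only [sigb, if_neg Bool.false_ne_true, mul_one, one_mul,
            mul_assoc, hss, hsig2, hrr, hrr2]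
          rw [show k + (q-1) = q by omega, hrq, mul_one]
  -- now apply closure induction
  have base : GoodWord q 1 := ⟨false, false, [], by simp, by simp [sigb, sylProd_nil]⟩
  refine Subgroup.closure_induction_right (p := fun x _ => GoodWord q x) base ?_ ?_ hh
  · rintro x _ y hy hx
    rcases hy with rfl | rfl
    · exact mulσ x hx
    · exact mulτ x hx
  · rintro x _ y hy hx
    rcases hy with rfl | rfl
    · rw [hsiginv]; exact mulσ x hx
    · exact mulτinv x hx

lemma sylProd_arc (hq : 3 ≤ q) :
    ∀ (L : List ℕ) (k : ℕ), (∀ j ∈ k :: L, 1 ≤ j ∧ j ≤ q - 1) →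
      ∀ z : RInf, inP z → inArc q (k-1) (sylProd q (k :: L) z) := by
  intro L
  induction L with
  | nil =>
    intro k hk z hz
    have hk' := hk k (by simp)
    rw [sylProd_cons, sylProd_nil, mul_one]
    rw [Equiv.Perm.mul_apply]
    exact rho_pow_inN_to_arc hq hk'.1 hk'.2 (sigma_inP_to_inN hz)
  | cons k' L' ih =>
    intro k hk z hz
    have hk'' := hk k (by simp)
    have hinner : inArc q (k'-1) (sylProd q (k' :: L') z) := by
      apply ih k' _ z hz
      intro j hj
      exact hk j (by simp at hj ⊢; tauto)
    have hinner' : inP (sylProd q (k' :: L') z) := by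
      have hbd := hk k' (by simp)
      exact inP_of_inArc hq (by omega) hinner
    rw [sylProd_cons, Equiv.Perm.mul_apply, Equiv.Perm.mul_apply]
    exact rho_pow_inN_to_arc hq hk''.1 hk''.2 (sigma_inP_to_inN hinner')

lemma inP_zero : inP ((0:ℝ) : RInf) := le_refl (0:ℝ)

lemma inP_infty : inP ∞ := trivial

/-- THE EDGE LEMMA: both endpoints of any edge lie in a common closed arc. -/
lemma edge_in_arc (hq : 3 ≤ q) {h : Equiv.Perm RInf} (hh : h ∈ Gq q) :
    ∃ i ≤ q - 1, inArc q i (h ((0:ℝ):RInf)) ∧ inArc q i (h ∞) := by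
  obtain ⟨e, d, L, hL, rfl⟩ := goodword_of_mem hq hh
  have hd0 : sigb d ((0:ℝ):RInf) = ((0:ℝ):RInf) ∨ sigb d ((0:ℝ):RInf) = ∞ := by
    cases d <;> simp [sigb, sigmaP_zero]
  have hd1 : sigb d ∞ = ((0:ℝ):RInf) ∨ sigb d ∞ = ∞ := by
    cases d <;> simp [sigb, sigmaP_infty]
  have hP0 : inP (sigb d ((0:ℝ):RInf)) := by
    rcases hd0 with h' | h' <;> rw [h']
    exacts [inP_zero, inP_infty]
  have hP1 : inP (sigb d ∞) := by
    rcases hd1 with h' | h' <;> rw [h']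
    exacts [inP_zero, inP_infty]
  have hN0 : inN (sigb d ((0:ℝ):RInf)) := by
    rcases hd0 with h' | h' <;> rw [h']
    exacts [inN_zero, inN_infty]
  have hN1 : inN (sigb d ∞) := by
    rcases hd1 with h' | h' <;> rw [h']
    exacts [inN_zero, inN_infty]
  rcases L with _ | ⟨k, L'⟩
  · -- trivial word: endpoints stay in {0, ∞} ⊆ last arc
    refine ⟨q - 1, le_refl _, ?_, ?_⟩ <;>
      rw [Equiv.Perm.mul_apply, Equiv.Perm.mul_apply, sylProd_nil] <;>
      simp only [Equiv.Perm.one_apply]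
    · apply inArc_last_of_inN hq
      cases e <;> simp only [sigb, if_pos, if_neg Bool.false_ne_true, Equiv.Perm.one_apply]
      · exact hN0
      · exact sigma_inP_to_inN hP0
    · apply inArc_last_of_inN hq
      cases e <;> simp only [sigb, if_pos, if_neg Bool.false_ne_true, Equiv.Perm.one_apply]
      · exact hN1
      · exact sigma_inP_to_inN hP1
  · have hk := hL k (by simp)
    have harc0 : inArc q (k-1) (sylProd q (k :: L') (sigb d ((0:ℝ):RInf))) :=
      sylProd_arc hq L' k hL _ hP0
    have harc1 : inArc q (k-1) (sylProd q (k :: L') (sigb d ∞)) :=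
      sylProd_arc hq L' k hL _ hP1
    cases e with
    | false =>
      refine ⟨k - 1, by omega, ?_, ?_⟩ <;>
        rw [Equiv.Perm.mul_apply, Equiv.Perm.mul_apply] <;>
        simp only [sigb, if_neg Bool.false_ne_true, Equiv.Perm.one_apply]
      exacts [harc0, harc1]
    | true =>
      refine ⟨q - 1, le_refl _, ?_, ?_⟩ <;>
        rw [Equiv.Perm.mul_apply, Equiv.Perm.mul_apply] <;>
        simp only [sigb, if_pos]
      · exact inArc_last_of_inN hq (sigma_inP_to_inN (inP_of_inArc hq (by omega) harc0))
      · exact inArc_last_of_inN hq (sigma_inP_to_inN (inP_of_inArc hq (by omega) harc1))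

end Words
section Cells

open OnePoint

variable {q : ℕ}

lemma zval_cast (hq : 3 ≤ q) (x : ZMod q) : ((x.val : ℕ) : ZMod q) = x := by
  haveI : NeZero q := ⟨by omega⟩
  exact ZMod.natCast_rightInverse x

lemma zval_lt (hq : 3 ≤ q) (x : ZMod q) : x.val < q := by
  haveI : NeZero q := ⟨by omega⟩
  exact ZMod.val_lt x

lemma zval_inj (hq : 3 ≤ q) {x y : ZMod q} (h : x.val = y.val) : x = y := by
  rw [← zval_cast hq x, ← zval_cast hq y, h]

lemma zval_ne_zero (hq : 3 ≤ q) {x : ZMod q} (h : x ≠ 0) : 1 ≤ x.val := by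
  haveI : NeZero q := ⟨by omega⟩
  rcases Nat.eq_zero_or_pos x.val with h0 | h0
  · exact absurd ((ZMod.val_eq_zero x).mp h0) h
  · omega

lemma zval_zero (hq : 3 ≤ q) : (0 : ZMod q).val = 0 := by
  haveI : NeZero q := ⟨by omega⟩
  exact ZMod.val_zero

lemma zval_one (hq : 3 ≤ q) : (1 : ZMod q).val = 1 := by
  rw [show (1 : ZMod q) = ((1:ℕ) : ZMod q) by norm_num, ZMod.val_cast_of_lt (by omega)]

lemma zval_sub_one (hq : 3 ≤ q) {x : ZMod q} (h : x ≠ 0) : (x - 1).val = x.val - 1 := by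
  haveI : NeZero q := ⟨by omega⟩
  have h1 : 1 ≤ x.val := zval_ne_zero hq h
  have hlt : x.val - 1 < q := by have := ZMod.val_lt x; omega
  have key : x - 1 = ((x.val - 1 : ℕ) : ZMod q) := by
    rw [Nat.cast_sub h1, zval_cast hq]
    norm_num
  rw [key, ZMod.val_cast_of_lt hlt]

lemma zval_neg (hq : 3 ≤ q) {x : ZMod q} (h : x ≠ 0) : (-x).val = q - x.val := by
  haveI : NeZero q := ⟨by omega⟩
  rw [ZMod.neg_val, if_neg h]

lemma zval_succ_cases (hq : 3 ≤ q) (x : ZMod q) :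
    ((x+1).val = x.val + 1 ∧ x.val < q - 1) ∨ (x + 1 = 0 ∧ x.val = q - 1 ∧ (x+1).val = 0) := by
  haveI : NeZero q := ⟨by omega⟩
  by_cases h : x + 1 = 0
  · right
    refine ⟨h, ?_, by rw [h]; exact zval_zero hq⟩
    have hx : x = -1 := by
      have := congrArg (fun t => t - 1) h
      simpa using this
    rw [hx, zval_neg hq (by
      intro h1
      have : (1 : ZMod q).val = 0 := by rw [h1]; exact zval_zero hq
      rw [zval_one hq] at this
      omega), zval_one hq]
  · left
    have hlt : x.val < q := zval_lt hq x
    have key : x + 1 = ((x.val + 1 : ℕ) : ZMod q) := by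
      rw [Nat.cast_add, zval_cast hq]; norm_num
    have hne : x.val + 1 ≠ q := by
      intro hc
      apply h
      rw [key, hc, ZMod.natCast_self]
    rw [key, ZMod.val_cast_of_lt (by omega)]
    omega

/-- the `i`-th vertex of the face `g(V0)`. -/
noncomputable def Vx (q : ℕ) (g : Equiv.Perm RInf) (i : ZMod q) : RInf :=
  g ((rhoP q ^ i.val) ∞)

/-- membership in the `i`-th closed cell of the face `g(V0)`. -/
def CellP (q : ℕ) (g : Equiv.Perm RInf) (i : ZMod q) (z : RInf) : Prop :=
  inArc q i.val (g⁻¹ z)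

variable (g : Equiv.Perm RInf)

lemma rho_pow_vertex (hq : 3 ≤ q) {j : ℕ} (hj : j ≤ q - 1) :
    (rhoP q ^ j) ∞ = if j = 0 then (∞ : RInf) else ((vq q j : ℝ) : RInf) := by
  rcases Nat.eq_zero_or_pos j with h0 | h0
  · subst h0; simp
  · rw [if_neg (by omega)]
    exact rho_pow_infty hq h0 hj

lemma vertex_distinct (hq : 3 ≤ q) {i j : ℕ} (hi : i ≤ q - 1) (hj : j ≤ q - 1)
    (h : (rhoP q ^ i) ∞ = (rhoP q ^ j) ∞) : i = j := by
  rw [rho_pow_vertex hq hi, rho_pow_vertex hq hj] at h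
  rcases Nat.eq_zero_or_pos i with h0 | h0 <;> rcases Nat.eq_zero_or_pos j with h1 | h1
  · omega
  · rw [if_pos h0, if_neg (by omega)] at h
    exact absurd h (by simp)
  · rw [if_neg (by omega), if_pos h1] at h
    exact absurd h.symm (by simp)
  · rw [if_neg (by omega), if_neg (by omega)] at h
    have hval : vq q i = vq q j := by
      have : ((vq q i : ℝ) : RInf) = ((vq q j : ℝ) : RInf) := h
      exact_mod_cast OnePoint.coe_eq_coe.mp this
    by_contra hne
    rcases Nat.lt_or_ge i j with hlt | hge
    · have := vq_lt hq h0 hlt hj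
      linarith
    · have hlt : j < i := by omega
      have := vq_lt hq h1 hlt hi
      linarith

/-- base-level: which vertices belong to which arcs. -/
lemma vertex_in_arc_iff (hq : 3 ≤ q) {i j : ℕ} (hi : i ≤ q - 1) (hj : j ≤ q - 1) :
    inArc q i ((rhoP q ^ j) ∞) ↔ (j = i ∨ j = i + 1 ∨ (i = q - 1 ∧ j = 0)) := by
  rw [rho_pow_vertex hq hj]
  rcases Nat.eq_zero_or_pos j with h0 | h0
  · subst h0
    rw [if_pos rfl]
    show (i = 0 ∨ i = q - 1) ↔ _
    constructor
    · rintro (rfl | rfl)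
      · exact Or.inl rfl
      · exact Or.inr (Or.inr ⟨rfl, rfl⟩)
    · rintro (rfl | h1 | ⟨rfl, -⟩)
      · exact Or.inl rfl
      · omega
      · exact Or.inr rfl
  · rw [if_neg (by omega)]
    constructor
    · intro h
      rcases h with ⟨rfl, hr⟩ | ⟨hlast, hr⟩ | ⟨hne0, hnelast, hlo, hhi⟩
      · -- i = 0 : vq 1 ≤ vq j forces j = 1
        right; left
        by_contra hne
        have hj2 : 2 ≤ j := by omega
        have := vq_lt hq (le_refl 1) (by omega : 1 < j) hj
        linarith
      · -- i = q-1 : vq j ≤ 0 forces j = q-1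
        left
        rw [hlast]
        by_contra hne
        have := vq_pos hq h0 (by omega : j ≤ q - 2)
        linarith
      · -- middle
        have hi1 : 1 ≤ i := by omega
        have hiq : i ≤ q - 2 := by omega
        rcases Nat.lt_or_ge j i with hlt | hge
        · exfalso
          rcases Nat.eq_zero_or_pos j with h' | h'
          · omega
          · have := vq_lt hq h' hlt hi
            linarith
        · rcases Nat.lt_or_ge (i+1) j with hlt2 | hge2
          · exfalso
            have := vq_lt hq (by omega) hlt2 hj
            linarith
          · rcases Nat.eq_or_lt_of_le hge with rfl | h'
            · exact Or.inl rfl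
            · right; left; omega
    · rintro (rfl | rfl | ⟨rfl, h2⟩)
      · -- j = i : i ≥ 1
        rcases Nat.eq_or_lt_of_le hi with rfl | hlt
        · exact Or.inr (Or.inl ⟨rfl, le_of_eq (vq_last hq (by omega))⟩)
        · refine Or.inr (Or.inr ⟨by omega, by omega, ?_, le_refl _⟩)
          exact le_of_lt (vq_succ_lt hq h0 (by omega))
      · -- j = i + 1
        rcases Nat.eq_zero_or_pos i with rfl | hpos
        · exact Or.inl ⟨rfl, le_refl _⟩
        · refine Or.inr (Or.inr ⟨by omega, by omega, le_refl _, ?_⟩)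
          exact le_of_lt (vq_succ_lt hq hpos (by omega))
      · omega

/-- base-level: a non-vertex point lies in at most one arc. -/
lemma nonvertex_arc_unique (hq : 3 ≤ q) {z : RInf}
    (hz : ∀ j ≤ q - 1, z ≠ (rhoP q ^ j) ∞) {i k : ℕ} (hi : i ≤ q - 1) (hk : k ≤ q - 1)
    (h1 : inArc q i z) (h2 : inArc q k z) : i = k := by
  match z with
  | Option.none =>
    exact absurd rfl (hz 0 (by omega) : (Option.none : RInf) ≠ (rhoP q ^ 0) ∞)
  | Option.some r =>
    -- helper: r is not any vertex value
    have hnv : ∀ t, 1 ≤ t → t ≤ q - 1 → r ≠ vq q t := by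
      intro t ht1 ht2 heq
      apply hz t ht2
      rw [rho_pow_infty hq ht1 ht2, heq]
      rfl
    have hl0 : 0 < vq q 1 := vq_pos hq le_rfl (by omega)
    -- analyze both membership shapes
    rcases h1 with ⟨rfl, hr1⟩ | ⟨hL1, hr1⟩ | ⟨hn1, hm1, hlo1, hhi1⟩ <;>
      rcases h2 with ⟨h2e, hr2⟩ | ⟨hL2, hr2⟩ | ⟨hn2, hm2, hlo2, hhi2⟩
    · omega
    · exfalso; linarith
    · -- i = 0, k middle
      exfalso
      rcases Nat.lt_or_ge 1 k with hk2 | hk2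
      · have := vq_lt hq le_rfl hk2 hk
        linarith
      · have hk1 : k = 1 := by omega
        subst hk1
        exact hnv 1 le_rfl (by omega) (by linarith)
    · exfalso; linarith
    · omega
    ·
      exfalso
      have h0 : 0 ≤ vq q (k+1) := vq_nonneg hq (by omega) (by omega)
      have hr0 : r = 0 := le_antisymm hr1 (by linarith)
      have : vq q (k+1) = 0 := by linarith
      have hk1 : k + 1 = q - 1 := by
        by_contra hne
        have := vq_pos hq (by omega) (by omega : k + 1 ≤ q - 2)
        linarith
      exact hnv (q-1) (by omega) le_rfl (by rw [← hk1]; linarith)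
    · -- i middle, k = 0
      exfalso
      rcases Nat.lt_or_ge 1 i with hi2 | hi2
      · have := vq_lt hq le_rfl hi2 hi
        linarith
      · have hi1 : i = 1 := by omega
        subst hi1
        exact hnv 1 le_rfl (by omega) (by linarith)
    · -- i middle, k = q-1
      exfalso
      have h0 : 0 ≤ vq q (i+1) := vq_nonneg hq (by omega) (by omega)
      have hr0 : r = 0 := le_antisymm hr2 (by linarith)
      have : vq q (i+1) = 0 := by linarith
      have hi1 : i + 1 = q - 1 := by
        by_contra hne
        have := vq_pos hq (by omega) (by omega : i + 1 ≤ q - 2)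
        linarith
      exact hnv (q-1) (by omega) le_rfl (by rw [← hi1]; linarith)
    · -- both middle
      by_contra hne
      rcases Nat.lt_or_ge i k with hlt | hge
      · have hik : i + 1 ≤ k := by omega
        have h1' : vq q k ≤ vq q (i+1) := by
          rcases Nat.eq_or_lt_of_le hik with rfl | h'
          · exact le_refl _
          · exact le_of_lt (vq_lt hq (by omega) h' hk)
        have hreq : r = vq q (i+1) := by linarith
        -- then also vq q k = vq q (i+1), so k = i+1 and r is a vertex value
        exact hnv (i+1) (by omega) (by omega) hreq
      · have hlt : k < i := by omega
        have hik : k + 1 ≤ i := by omega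
        have h1' : vq q i ≤ vq q (k+1) := by
          rcases Nat.eq_or_lt_of_le hik with rfl | h'
          · exact le_refl _
          · exact le_of_lt (vq_lt hq (by omega) h' hi)
        have hreq : r = vq q (k+1) := by linarith
        exact hnv (k+1) (by omega) (by omega) hreq

end Cells
section CellsZ

open OnePoint

variable {q : ℕ} {g : Equiv.Perm RInf}

lemma Vx_inj (hq : 3 ≤ q) {i j : ZMod q} (h : Vx q g i = Vx q g j) : i = j := by
  have := g.injective h
  have hval := vertex_distinct hq (by have := zval_lt hq i; omega)
    (by have := zval_lt hq j; omega) this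
  exact zval_inj hq hval

lemma cell_vertex_iff (hq : 3 ≤ q) (i j : ZMod q) :
    CellP q g i (Vx q g j) ↔ (j = i ∨ j = i + 1) := by
  unfold CellP Vx
  rw [← Equiv.Perm.mul_apply, inv_mul_cancel, Equiv.Perm.one_apply]
  rw [vertex_in_arc_iff hq (by have := zval_lt hq i; omega) (by have := zval_lt hq j; omega)]
  rcases zval_succ_cases hq i with ⟨hval, hlt⟩ | ⟨hzero, hval, hval0⟩
  · -- (i+1).val = i.val + 1
    constructor
    · rintro (h | h | ⟨h1, h2⟩)
      · exact Or.inl (zval_inj hq h)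
      · exact Or.inr (zval_inj hq (by omega))
      · omega
    · rintro (rfl | rfl)
      · exact Or.inl rfl
      · right; left; omega
  · -- i.val = q - 1, i + 1 = 0
    constructor
    · rintro (h | h | ⟨h1, h2⟩)
      · exact Or.inl (zval_inj hq h)
      · have := zval_lt hq j; omega
      · exact Or.inr (zval_inj hq (by rw [hval0]; exact h2))
    · rintro (rfl | rfl)
      · exact Or.inl rfl
      · right; right
        exact ⟨hval, by rw [hval0]⟩

lemma cell_unique (hq : 3 ≤ q) {w : RInf} (hw : ∀ c : ZMod q, w ≠ Vx q g c)
    {i k : ZMod q} (h1 : CellP q g i w) (h2 : CellP q g k w) : i = k := by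
  apply zval_inj hq
  apply nonvertex_arc_unique hq (z := g⁻¹ w) ?_ (by have := zval_lt hq i; omega)
    (by have := zval_lt hq k; omega) h1 h2
  intro j hj heq
  apply hw ((j : ℕ) : ZMod q)
  rw [Vx, ZMod.val_cast_of_lt (by omega : j < q), ← heq, ← Equiv.Perm.mul_apply, mul_inv_cancel, Equiv.Perm.one_apply]

lemma adj_in_cell (hq : 3 ≤ q) (hg : g ∈ Gq q) {u w : RInf} (h : FareyAdj q u w) :
    ∃ i : ZMod q, CellP q g i u ∧ CellP q g i w := by
  obtain ⟨hne, h', hmem, hcase⟩ := h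
  obtain ⟨i, hi, h0, hinf⟩ := edge_in_arc hq (mul_mem (inv_mem hg) hmem)
  rw [Equiv.Perm.mul_apply] at h0 hinf
  refine ⟨((i : ℕ) : ZMod q), ?_, ?_⟩ <;>
    unfold CellP <;> rw [ZMod.val_cast_of_lt (by omega : i < q)]
  · rcases hcase with ⟨hu, hw⟩ | ⟨hu, hw⟩
    · rw [← hu]; exact h0
    · rw [← hw]; exact hinf
  · rcases hcase with ⟨hu, hw⟩ | ⟨hu, hw⟩
    · rw [← hw]; exact hinf
    · rw [← hu]; exact h0

lemma adj_consec (hq : 3 ≤ q) (hg : g ∈ Gq q) (i : ZMod q) :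
    FareyAdj q (Vx q g i) (Vx q g (i+1)) := by
  have hone : (1 : ZMod q) ≠ 0 := by
    intro h1
    have : (1 : ZMod q).val = 0 := by rw [h1]; exact zval_zero hq
    rw [zval_one hq] at this
    omega
  constructor
  · intro heq
    have := Vx_inj hq heq
    apply hone
    have h2 := congrArg (fun t => t - i) this
    simpa using h2.symm
  · refine ⟨g * rhoP q ^ (i.val + 1),
      mul_mem hg (pow_mem (rhoP_mem q) _), Or.inl ⟨?_, ?_⟩⟩
    · rw [Equiv.Perm.mul_apply]
      unfold Vx
      congr 1
      rw [pow_succ, Equiv.Perm.mul_apply, rhoP_zero]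
    · rw [Equiv.Perm.mul_apply]
      unfold Vx
      congr 1
      rcases zval_succ_cases hq i with ⟨hval, _⟩ | ⟨hzero, hval, hval0⟩
      · rw [hval]
      · rw [hval0, pow_zero, Equiv.Perm.one_apply, show i.val + 1 = q by omega,
          rhoP_pow_q hq, Equiv.Perm.one_apply]

lemma adj_symm {u w : RInf} (h : FareyAdj q u w) : FareyAdj q w u := by
  obtain ⟨hne, h', hmem, hcase⟩ := h
  exact ⟨hne.symm, h', hmem, hcase.symm⟩

/-- cyclic distance on `ZMod q`. -/
def cdist (A B : ZMod q) : ℕ := min (B - A).val (A - B).val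

lemma cdist_self (A : ZMod q) : cdist A A = 0 := by
  simp [cdist, ZMod.val_zero]

lemma cdist_eq_zero (hq : 3 ≤ q) {A B : ZMod q} (h : cdist A B = 0) : A = B := by
  rw [cdist] at h
  rcases Nat.min_eq_zero_iff.mp h with h' | h'
  · have h2 := (ZMod.val_eq_zero _).mp h'
    rw [sub_eq_zero] at h2
    exact h2.symm
  · have h2 := (ZMod.val_eq_zero _).mp h'
    rwa [sub_eq_zero] at h2

end CellsZ
section Walks

open OnePoint

variable {q : ℕ} {g : Equiv.Perm RInf}

noncomputable def walkL (q : ℕ) (g : Equiv.Perm RInf) (e : ZMod q) : ℕ → ZMod q → List RInf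
  | 0, A => [Vx q g A]
  | (d+1), A => Vx q g A :: walkL q g e d (A + e)

@[simp] lemma walk_zero (e A : ZMod q) : walkL q g e 0 A = [Vx q g A] := rfl

lemma walk_succ (e A : ZMod q) (d : ℕ) :
    walkL q g e (d+1) A = Vx q g A :: walkL q g e d (A + e) := rfl

lemma walk_length (e A : ZMod q) (d : ℕ) : (walkL q g e d A).length = d + 1 := by
  induction d generalizing A with
  | zero => rfl
  | succ d ih => rw [walk_succ, List.length_cons, ih]

lemma walk_head (e A : ZMod q) (d : ℕ) : (walkL q g e d A).head? = Option.some (Vx q g A) := by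
  cases d <;> rfl

lemma walk_last (e A : ZMod q) (d : ℕ) :
    (walkL q g e d A).getLast? = Option.some (Vx q g (A + (d : ZMod q) * e)) := by
  induction d generalizing A with
  | zero => simp
  | succ d ih =>
    rw [walk_succ]
    have h2 : walkL q g e d (A + e) = Vx q g (A+e) :: (walkL q g e d (A+e)).tail := by
      cases d <;> rfl
    rw [h2, List.getLast?_cons_cons, ← h2, ih]
    have h3 : A + e + (d : ZMod q) * e = A + ((d+1 : ℕ) : ZMod q) * e := by
      push_cast
      ring
    rw [h3]

lemma walk_mem (e A : ZMod q) (d : ℕ) {w : RInf} (hw : w ∈ walkL q g e d A) :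
    ∃ j : ZMod q, w = Vx q g j := by
  induction d generalizing A with
  | zero => simp at hw; exact ⟨A, hw⟩
  | succ d ih =>
    rw [walk_succ] at hw
    rcases List.mem_cons.mp hw with rfl | h
    · exact ⟨A, rfl⟩
    · exact ih _ h

lemma walk_chain (e A : ZMod q) (d : ℕ)
    (hadj : ∀ X : ZMod q, FareyAdj q (Vx q g X) (Vx q g (X + e))) :
    (walkL q g e d A).Chain' (FareyAdj q) := by
  induction d generalizing A with
  | zero => simp; exact List.isChain_singleton _
  | succ d ih =>
    rw [walk_succ]; refine List.isChain_cons.mpr ?_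
    refine ⟨?_, ih _⟩
    intro y hy
    rw [walk_head] at hy
    cases hy
    exact hadj A

end Walks
section CdistArith

open OnePoint

variable {q : ℕ}

lemma sub_ne_zero_of_ne' {A B : ZMod q} (h : A ≠ B) : B - A ≠ 0 :=
  sub_ne_zero.mpr (Ne.symm h)

lemma cdist_comm_vals (hq : 3 ≤ q) {A B : ZMod q} (h : A ≠ B) :
    1 ≤ (B - A).val ∧ 1 ≤ (A - B).val ∧ (B - A).val + (A - B).val = q := by
  have h1 := zval_ne_zero hq (sub_ne_zero_of_ne' h)
  have h2 := zval_ne_zero hq (sub_ne_zero_of_ne' (Ne.symm h))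
  have h3 : A - B = -(B - A) := by ring
  have h4 : (A - B).val = q - (B - A).val := by
    rw [h3, zval_neg hq (sub_ne_zero_of_ne' h)]
  have h5 := zval_lt hq (B - A)
  exact ⟨h1, h2, by omega⟩

lemma step_up_vals (hq : 3 ≤ q) {A B : ZMod q} (hAB : A ≠ B) (hne : A + 1 ≠ B) :
    (B - (A+1)).val = (B - A).val - 1 ∧ ((A+1) - B).val = q - ((B - A).val - 1) := by
  have e1 : B - (A + 1) = (B - A) - 1 := by ring
  have e2 : (B - (A+1)).val = (B - A).val - 1 := by
    rw [e1, zval_sub_one hq (sub_ne_zero_of_ne' hAB)]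
  refine ⟨e2, ?_⟩
  have e3 : (A+1) - B = -(B - (A+1)) := by ring
  rw [e3, zval_neg hq (sub_ne_zero_of_ne' hne), e2]

lemma step_down_vals (hq : 3 ≤ q) {A B : ZMod q} (hAB : A ≠ B) (hne : A - 1 ≠ B) :
    ((A-1) - B).val = (A - B).val - 1 ∧ (B - (A-1)).val = q - ((A - B).val - 1) := by
  have e1 : (A - 1) - B = (A - B) - 1 := by ring
  have e2 : ((A-1) - B).val = (A - B).val - 1 := by
    rw [e1, zval_sub_one hq (sub_ne_zero_of_ne' (Ne.symm hAB))]
  refine ⟨e2, ?_⟩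
  have e3 : B - (A-1) = -((A-1) - B) := by ring
  rw [e3, zval_neg hq ?_, e2]
  intro hc
  apply hne
  have := sub_eq_zero.mp hc
  exact this

lemma zval_one_eq (hq : 3 ≤ q) {A B : ZMod q} (h : A + 1 = B) :
    (B - A).val = 1 := by
  have : B - A = 1 := by rw [← h]; ring
  rw [this, zval_one hq]

lemma cdist_lip_up (hq : 3 ≤ q) (A B : ZMod q) : cdist A B ≤ cdist (A+1) B + 1 := by
  by_cases hAB : A = B
  · subst hAB; rw [cdist_self]; omega
  by_cases hne : A + 1 = B
  · have h1 := zval_one_eq hq hne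
    rw [cdist]
    omega
  · obtain ⟨h1, h2, h3⟩ := cdist_comm_vals hq hAB
    obtain ⟨e1, e2⟩ := step_up_vals hq hAB hne
    have e3 : B - (A + 1) ≠ 0 := sub_ne_zero_of_ne' hne
    have h4 := zval_ne_zero hq e3
    rw [cdist, cdist]
    omega

lemma cdist_lip_down (hq : 3 ≤ q) (A B : ZMod q) : cdist A B ≤ cdist (A-1) B + 1 := by
  by_cases hAB : A = B
  · subst hAB; rw [cdist_self]; omega
  by_cases hne : A - 1 = B
  · have h1 : (A - B).val = 1 := by
      have : A - B = 1 := by rw [← hne]; ring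
      rw [this, zval_one hq]
    rw [cdist]
    omega
  · obtain ⟨h1, h2, h3⟩ := cdist_comm_vals hq hAB
    obtain ⟨e1, e2⟩ := step_down_vals hq hAB hne
    have e3 : (A - 1) - B ≠ 0 := sub_ne_zero.mpr hne
    have h4 := zval_ne_zero hq e3
    rw [cdist, cdist]
    omega

end CdistArith
section MainInduction

open OnePoint

variable {q : ℕ} {g : Equiv.Perm RInf}

lemma key_induction (hq : 3 ≤ q) (hg : g ∈ Gq q) (B : ZMod q) :
    ∀ n (p : List RInf), p.length = n → p.Chain' (FareyAdj q) →
      p.getLast? = Option.some (Vx q g B) →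
      ((∀ A : ZMod q, p.head? = Option.some (Vx q g A) →
          cdist A B + 1 ≤ n ∧
          (n = cdist A B + 1 →
            ((B - A).val = cdist A B ∧ p = walkL q g 1 (cdist A B) A) ∨
            ((A - B).val = cdist A B ∧ p = walkL q g (-1) (cdist A B) A))) ∧
       (∀ (w : RInf) (i : ZMod q), p.head? = Option.some w →
          (∀ c : ZMod q, w ≠ Vx q g c) → CellP q g i w →
          min (cdist i B) (cdist (i+1) B) + 2 ≤ n)) := by
  intro n
  induction n using Nat.strong_induction_on with
  | _ n ih =>
    intro p hlen hchain hlast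
    match p with
    | [] => simp at hlast
    | [w0] =>
      have hw0 : w0 = Vx q g B := by
        simp at hlast
        exact hlast
      constructor
      · intro A hhead
        have hA : Vx q g A = Vx q g B := by
          simp at hhead
          rw [← hhead, hw0]
        have hAB : A = B := Vx_inj hq hA
        subst hAB
        rw [cdist_self]
        subst hlen
        refine ⟨by simp, ?_⟩
        intro _
        left
        refine ⟨by rw [sub_self]; exact zval_zero hq, ?_⟩
        rw [walk_zero, hw0]
      · intro w i hhead hnv _
        simp at hhead
        exact absurd (by rw [← hhead, hw0]) (hnv B)
    | w0 :: w1 :: rest =>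
      have hlen' : (w1 :: rest).length = n - 1 := by
        simp at hlen ⊢
        omega
      have hn2 : 2 ≤ n := by simp at hlen; omega
      have hadj : FareyAdj q w0 w1 := (List.isChain_cons_cons.mp hchain).1
      have hchain' : (w1 :: rest).Chain' (FareyAdj q) := (List.isChain_cons_cons.mp hchain).2
      have hlast' : (w1 :: rest).getLast? = Option.some (Vx q g B) := by
        rwa [List.getLast?_cons_cons] at hlast
      have IH := ih (n-1) (by omega) (w1 :: rest) hlen' hchain' hlast'
      constructor
      · -- part (a)
        intro A hhead
        have hw0 : w0 = Vx q g A := by simpa using hhead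
        subst hw0
        by_cases hAB : A = B
        · subst hAB
          rw [cdist_self]
          exact ⟨by omega, by intro h; omega⟩
        · obtain ⟨i, hcu, hcw⟩ := adj_in_cell hq hg hadj
          have hAi : A = i ∨ A = i + 1 := (cell_vertex_iff hq i A).mp hcu
          by_cases hv : ∃ c : ZMod q, w1 = Vx q g c
          · obtain ⟨c, rfl⟩ := hv
            have hci : c = i ∨ c = i + 1 := (cell_vertex_iff hq i c).mp hcw
            have hcA : c ≠ A := by
              intro h
              exact hadj.1 (by rw [h])
            have hstep : c = A + 1 ∨ c = A - 1 := by
              rcases hAi with rfl | hA1 <;> rcases hci with rfl | rfl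
              · exact absurd rfl hcA
              · exact Or.inl rfl
              · right; rw [hA1]; ring
              · exact absurd (by rw [hA1]) hcA
            have HT := IH.1 c rfl
            have hbd := HT.1
            have hlip : cdist A B ≤ cdist c B + 1 := by
              rcases hstep with rfl | rfl
              · exact cdist_lip_up hq A B
              · exact cdist_lip_down hq A B
            obtain ⟨d1p, d2p, hsum⟩ := cdist_comm_vals hq hAB
            have hcd1 : 1 ≤ cdist A B := by
              simp only [cdist]; omega
            refine ⟨by omega, ?_⟩
            intro hn
            have heq : cdist c B = cdist A B - 1 := by omega
            have hlen2 : n - 1 = cdist c B + 1 := by omega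
            have hclass := HT.2 hlen2
            by_cases hcB : c = B
            · have hc0 : cdist c B = 0 := by rw [hcB, cdist_self]
              have hd1 : cdist A B = 1 := by omega
              have htl : Vx q g c :: rest = [Vx q g c] := by
                rcases hclass with ⟨_, htl⟩ | ⟨_, htl⟩ <;> rw [htl, hc0, walk_zero]
              rcases hstep with rfl | rfl
              · left
                refine ⟨by rw [zval_one_eq hq hcB, hd1], ?_⟩
                rw [hd1, walk_succ, walk_zero, htl]
              · right
                have hval : (A - B).val = 1 := by
                  rw [show A - B = 1 by rw [← hcB]; ring, zval_one hq]
                refine ⟨by rw [hval, hd1], ?_⟩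
                have hsub : A + (-1 : ZMod q) = A - 1 := by ring
                rw [hd1, walk_succ, walk_zero, hsub, htl]
            · rcases hstep with rfl | rfl
              · -- step up
                obtain ⟨e1, e2⟩ := step_up_vals hq hAB hcB
                rcases hclass with ⟨hval, htl⟩ | ⟨hval, htl⟩
                · left
                  constructor
                  · simp only [cdist] at heq hval e1 e2 hcd1 ⊢
                    omega
                  · have hsplit : cdist A B = cdist (A+1) B + 1 := by omega
                    rw [hsplit, walk_succ, ← htl]
                · exfalso
                  simp only [cdist] at heq hval e1 e2 hcd1
                  omega
              · -- step down
                obtain ⟨e1, e2⟩ := step_down_vals hq hAB hcB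
                rcases hclass with ⟨hval, htl⟩ | ⟨hval, htl⟩
                · exfalso
                  simp only [cdist] at heq hval e1 e2 hcd1
                  omega
                · right
                  constructor
                  · simp only [cdist] at heq hval e1 e2 hcd1 ⊢
                    omega
                  · have hsplit : cdist A B = cdist (A-1) B + 1 := by omega
                    have hsub : A + (-1 : ZMod q) = A - 1 := by ring
                    rw [hsplit, walk_succ, hsub, ← htl]
          · -- w1 is not a vertex
            push_neg at hv
            have hbd := IH.2 w1 i (by simp) hv hcw
            have l1 := cdist_lip_up hq A B
            have l2 := cdist_lip_down hq A B
            have hkey : cdist A B ≤ min (cdist i B) (cdist (i+1) B) + 1 := by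
              rcases hAi with rfl | hA1
              · omega
              · have : i = A - 1 := by rw [hA1]; ring
                rw [this] at hbd ⊢
                have h2 : A - 1 + 1 = A := by ring
                rw [h2] at hbd ⊢
                omega
            exact ⟨by omega, by intro h; omega⟩
      · -- part (b)
        intro w i hhead hnv hcell
        have hw0 : w0 = w := by simpa using hhead
        subst hw0
        obtain ⟨k, hcu, hcw⟩ := adj_in_cell hq hg hadj
        have hki : k = i := cell_unique hq hnv hcu hcell
        subst hki
        by_cases hv : ∃ c : ZMod q, w1 = Vx q g c
        · obtain ⟨c, rfl⟩ := hv
          have hci : c = k ∨ c = k + 1 := (cell_vertex_iff hq k c).mp hcw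
          have hbd := (IH.1 c rfl).1
          rcases hci with rfl | rfl
          · omega
          · omega
        · push_neg at hv
          have hbd := IH.2 w1 k (by simp) hv hcw
          omega

end MainInduction
section Assembly

open OnePoint

variable {q : ℕ} {g : Equiv.Perm RInf}

lemma walk_up_path (hq : 3 ≤ q) (hg : g ∈ Gq q) (A B : ZMod q) :
    IsPathFrom q (walkL q g 1 ((B-A).val) A) (Vx q g A) (Vx q g B) := by
  refine ⟨walk_chain _ _ _ (fun X => adj_consec hq hg X), walk_head _ _ _, ?_⟩
  rw [walk_last]
  congr 1
  rw [mul_one, zval_cast hq]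
  ring

lemma walk_down_path (hq : 3 ≤ q) (hg : g ∈ Gq q) (A B : ZMod q) :
    IsPathFrom q (walkL q g (-1) ((A-B).val) A) (Vx q g A) (Vx q g B) := by
  refine ⟨walk_chain _ _ _ (fun X => ?_), walk_head _ _ _, ?_⟩
  · have h := adj_symm (adj_consec hq hg (X - 1))
    have h2 : X - 1 + 1 = X := by ring
    have h3 : X + (-1 : ZMod q) = X - 1 := by ring
    rw [h2] at h
    rw [h3]
    exact h
  · rw [walk_last]
    congr 1
    rw [zval_cast hq]
    ring

lemma path_min (hq : 3 ≤ q) (hg : g ∈ Gq q) (A B : ZMod q) {p : List RInf}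
    (h : IsPathFrom q p (Vx q g A) (Vx q g B)) : cdist A B + 1 ≤ p.length :=
  ((key_induction hq hg B p.length p rfl h.1 h.2.2).1 A h.2.1).1

lemma path_classify (hq : 3 ≤ q) (hg : g ∈ Gq q) {A B : ZMod q} {p : List RInf}
    (h : IsPathFrom q p (Vx q g A) (Vx q g B)) (hl : p.length = cdist A B + 1) :
    ((B - A).val = cdist A B ∧ p = walkL q g 1 (cdist A B) A) ∨
    ((A - B).val = cdist A B ∧ p = walkL q g (-1) (cdist A B) A) :=
  ((key_induction hq hg B p.length p rfl h.1 h.2.2).1 A h.2.1).2 hl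

lemma geod_up (hq : 3 ≤ q) (hg : g ∈ Gq q) {A B : ZMod q}
    (h : (B-A).val ≤ (A-B).val) :
    IsGeodesicPath q (walkL q g 1 ((B-A).val) A) (Vx q g A) (Vx q g B) := by
  refine ⟨walk_up_path hq hg A B, ?_⟩
  intro p' hp'
  have := path_min hq hg A B hp'
  rw [walk_length]
  have hc : cdist A B = (B-A).val := by rw [cdist]; omega
  omega

lemma geod_down (hq : 3 ≤ q) (hg : g ∈ Gq q) {A B : ZMod q}
    (h : (A-B).val ≤ (B-A).val) :
    IsGeodesicPath q (walkL q g (-1) ((A-B).val) A) (Vx q g A) (Vx q g B) := by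
  refine ⟨walk_down_path hq hg A B, ?_⟩
  intro p' hp'
  have := path_min hq hg A B hp'
  rw [walk_length]
  have hc : cdist A B = (A-B).val := by rw [cdist]; omega
  omega

lemma geod_classify (hq : 3 ≤ q) (hg : g ∈ Gq q) {A B : ZMod q} {p : List RInf}
    (hp : IsGeodesicPath q p (Vx q g A) (Vx q g B)) :
    ((B-A).val ≤ (A-B).val ∧ p = walkL q g 1 ((B-A).val) A) ∨
    ((A-B).val ≤ (B-A).val ∧ p = walkL q g (-1) ((A-B).val) A) := by
  obtain ⟨hpath, hmin⟩ := hp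
  have h1 := hmin _ (walk_up_path hq hg A B)
  have h2 := hmin _ (walk_down_path hq hg A B)
  rw [walk_length] at h1 h2
  have h3 := path_min hq hg A B hpath
  have hlen : p.length = cdist A B + 1 := by
    rw [cdist] at h3 ⊢
    omega
  have hcd : cdist A B = min ((B-A).val) ((A-B).val) := rfl
  rcases path_classify hq hg hpath hlen with ⟨hval, hp'⟩ | ⟨hval, hp'⟩
  · left
    refine ⟨by rw [cdist] at hval; omega, ?_⟩
    rw [hp', hval]
  · right
    refine ⟨by rw [cdist] at hval; omega, ?_⟩
    rw [hp', hval]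

lemma walks_ne (hq : 3 ≤ q) {A B : ZMod q} (hAB : A ≠ B) (d1 d2 : ℕ)
    (h1 : 1 ≤ d1) (h2 : 1 ≤ d2) :
    walkL q g 1 d1 A ≠ walkL q g (-1) d2 A := by
  obtain ⟨m1, rfl⟩ : ∃ m, d1 = m + 1 := ⟨d1 - 1, by omega⟩
  obtain ⟨m2, rfl⟩ : ∃ m, d2 = m + 1 := ⟨d2 - 1, by omega⟩
  rw [walk_succ, walk_succ]
  intro hcontra
  have h3 : walkL q g 1 m1 (A + 1) = walkL q g (-1) m2 (A + (-1)) :=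
    (List.cons.injEq _ _ _ _ ▸ hcontra).2
  have h4 := congrArg List.head? h3
  rw [walk_head, walk_head] at h4
  have h5 : A + 1 = A + (-1) := Vx_inj hq (Option.some.inj h4)
  have h6 : (2 : ZMod q) = 0 := by linear_combination h5
  have h7 : (2 : ZMod q).val = 0 := by rw [h6]; exact zval_zero hq
  rw [show (2 : ZMod q) = ((2:ℕ) : ZMod q) by norm_num, ZMod.val_cast_of_lt (by omega)] at h7
  omega

end Assembly
/-- geodesic paths between two vertices of a face stay on the face,
and there are exactly two of them for opposite vertices when `q` is even, and
exactly one otherwise. -/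
theorem stmt8 (q : ℕ) (hq : 3 ≤ q) (g : Equiv.Perm RInf) (hg : g ∈ Gq q)
    (a b : ℕ) (hab : a < b) (hbq : b ≤ q - 1) (x y : RInf)
    (hx : x = g ((rhoP q ^ a) ∞)) (hy : y = g ((rhoP q ^ b) ∞)) (hxy : x ≠ y) :
    (∀ p : List RInf, IsGeodesicPath q p x y → ∀ w ∈ p, w ∈ ⇑g '' V0 q) ∧
    (if q % 2 = 0 ∧ b - a = q / 2 then
        ∃ p₁ p₂ : List RInf, p₁ ≠ p₂ ∧
          ∀ p : List RInf, IsGeodesicPath q p x y ↔ (p = p₁ ∨ p = p₂)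
      else ∃! p : List RInf, IsGeodesicPath q p x y) := by
  haveI : NeZero q := ⟨by omega⟩
  set A : ZMod q := (a : ZMod q) with hA
  set B : ZMod q := (b : ZMod q) with hB
  have hav : A.val = a := ZMod.val_cast_of_lt (by omega)
  have hbv : B.val = b := ZMod.val_cast_of_lt (by omega)
  have hxV : x = Vx q g A := by rw [hx, Vx, hav]
  have hyV : y = Vx q g B := by rw [hy, Vx, hbv]
  have hABne : A ≠ B := by
    intro h
    exact hxy (by rw [hxV, hyV, h])
  have hd1 : (B - A).val = b - a := by
    have h' : B - A = ((b - a : ℕ) : ZMod q) := by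
      rw [hA, hB, Nat.cast_sub (le_of_lt hab)]
    rw [h', ZMod.val_cast_of_lt (by omega)]
  obtain ⟨hp1, hp2, hsum⟩ := cdist_comm_vals hq hABne
  have hd2 : (A - B).val = q - (b - a) := by omega
  rw [hxV, hyV]
  constructor
  · -- geodesics stay on the face
    intro p hp w hw
    rcases geod_classify hq hg hp with ⟨_, rfl⟩ | ⟨_, rfl⟩ <;>
    · obtain ⟨j, rfl⟩ := walk_mem _ _ _ hw
      exact ⟨(rhoP q ^ j.val) ∞, ⟨j.val, zval_lt hq j, rfl⟩, rfl⟩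
  · split_ifs with hcond
    · -- two geodesics (tie)
      have htie : (B-A).val = (A-B).val := by omega
      refine ⟨walkL q g 1 ((B-A).val) A, walkL q g (-1) ((A-B).val) A,
        walks_ne hq hABne _ _ (by omega) (by omega), ?_⟩
      intro p
      constructor
      · intro hp
        rcases geod_classify hq hg hp with ⟨_, h⟩ | ⟨_, h⟩
        · exact Or.inl h
        · exact Or.inr h
      · rintro (rfl | rfl)
        · exact geod_up hq hg (le_of_eq htie)
        · exact geod_down hq hg (le_of_eq htie.symm)
    · -- unique geodesic
      have hne2 : (B-A).val ≠ (A-B).val := by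
        intro h
        exact hcond (by omega)
      rcases Nat.lt_or_ge ((B-A).val) ((A-B).val) with hlt | hge
      · refine ⟨walkL q g 1 ((B-A).val) A, geod_up hq hg (le_of_lt hlt), ?_⟩
        intro p hp
        rcases geod_classify hq hg hp with ⟨_, h⟩ | ⟨hle, h⟩
        · exact h
        · omega
      · have hlt : (A-B).val < (B-A).val := by omega
        refine ⟨walkL q g (-1) ((A-B).val) A, geod_down hq hg (le_of_lt hlt), ?_⟩
        intro p hp
        rcases geod_classify hq hg hp with ⟨hle, h⟩ | ⟨_, h⟩
        · omega
        · exact h
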